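/- Let n ≥ 1 and let λ₁, …, λₙ be positive real numbers. There exist vectors x₁, …, xₙ in ℝ³ with ‖xⱼ‖ = λⱼ for each j and x₁ + ⋯ + xₙ = 0 if and only if λⱼ ≤ Σ_{i ≠ j} λᵢ for every j = 1, …, n. -/

import Mathlib

noncomputable def pvec (p q : ℝ) : EuclideanSpace ℝ (Fin 3) :=
  (WithLp.equiv 2 (Fin 3 → ℝ)).symm ![p, q, 0]

lemma pvec_norm (p q : ℝ) : ‖pvec p q‖ = Real.sqrt (p^2 + q^2) := by
  simp [pvec, EuclideanSpace.norm_eq, Fin.sum_univ_three, sq_abs]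

lemma pvec_smul (c p q : ℝ) : c • pvec p q = pvec (c*p) (c*q) := by
  ext i; fin_cases i <;> simp [pvec]

lemma pvec_add (p q p' q' : ℝ) : pvec p q + pvec p' q' = pvec (p+p') (q+q') := by
  ext i; fin_cases i <;> simp [pvec]

lemma pvec_zero : pvec 0 0 = 0 := by
  ext i; fin_cases i <;> simp [pvec]

lemma triangle_vectors (a b c : ℝ) (ha : 0 < a) (hb : 0 ≤ b) (hc : 0 ≤ c)
    (h1 : a ≤ b + c) (h2 : b ≤ a + c) (h3 : c ≤ a + b) :
    ∃ u v w : EuclideanSpace ℝ (Fin 3),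
      ‖u‖ = 1 ∧ ‖v‖ = 1 ∧ ‖w‖ = 1 ∧ a • u + b • v + c • w = 0 := by
  rcases eq_or_lt_of_le hb with hb0 | hb
  · -- b = 0, so a = c
    have hac : a = c := le_antisymm (by linarith) (by linarith)
    refine ⟨pvec 1 0, pvec 1 0, pvec (-1) 0, ?_, ?_, ?_, ?_⟩
    · simp [pvec_norm]
    · simp [pvec_norm]
    · simp [pvec_norm]
    · rw [pvec_smul, pvec_smul, pvec_smul, pvec_add, pvec_add, ← pvec_zero]
      rw [← hb0]
      ring_nf
      rw [hac]; ring_nf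
  · rcases eq_or_lt_of_le hc with hc0 | hc
    · have hab : a = b := le_antisymm (by linarith) (by linarith)
      refine ⟨pvec 1 0, pvec (-1) 0, pvec 1 0, ?_, ?_, ?_, ?_⟩
      · simp [pvec_norm]
      · simp [pvec_norm]
      · simp [pvec_norm]
      · rw [pvec_smul, pvec_smul, pvec_smul, pvec_add, pvec_add, ← pvec_zero]
        rw [← hc0, hab]; ring_nf
    · -- all positive
      set x : ℝ := (c^2 - a^2 - b^2) / (2*a*b) with hx
      have hx1 : x ≤ 1 := by
        rw [hx, div_le_one (by positivity)]
        nlinarith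
      have hx2 : -1 ≤ x := by
        rw [hx, le_div_iff₀ (by positivity)]
        nlinarith
      have hx2' : x^2 ≤ 1 := by nlinarith
      set y : ℝ := Real.sqrt (1 - x^2) with hy
      have hy2 : y^2 = 1 - x^2 := Real.sq_sqrt (by linarith)
      have key : (a + b*x)^2 + (b*y)^2 = c^2 := by
        have : 2*a*b*x = c^2 - a^2 - b^2 := by
          rw [hx]; field_simp
        nlinarith [hy2]
      refine ⟨pvec 1 0, pvec x y, pvec (-(a + b*x)/c) (-(b*y)/c), ?_, ?_, ?_, ?_⟩
      · simp [pvec_norm]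
      · rw [pvec_norm]
        rw [show x^2 + y^2 = 1 by rw [hy2]; ring]
        exact Real.sqrt_one
      · rw [pvec_norm]
        rw [show (-(a + b*x)/c)^2 + (-(b*y)/c)^2 = 1 by
          field_simp
          nlinarith [key]]
        exact Real.sqrt_one
      · rw [pvec_smul, pvec_smul, pvec_smul, pvec_add, pvec_add, ← pvec_zero]
        have hc' : c ≠ 0 := ne_of_gt hc
        congr 1 <;> field_simp <;> ring

lemma exists_subset_sum_between {ι : Type*} [DecidableEq ι] (f : ι → ℝ) (M : ℝ) (hM : 0 ≤ M) :
    ∀ (S : Finset ι), (∀ i ∈ S, f i ≤ M) → ∀ t : ℝ, 0 ≤ t → t ≤ ∑ i ∈ S, f i →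
    ∃ B ⊆ S, t - M ≤ ∑ i ∈ B, f i ∧ ∑ i ∈ B, f i ≤ t := by
  intro S
  induction S using Finset.induction_on with
  | empty =>
    intro _ t ht hts
    simp only [Finset.sum_empty] at hts
    exact ⟨∅, Finset.Subset.refl _, by simp; linarith, by simp; linarith⟩
  | insert _ _ ha ih =>
    rename_i a S
    intro hfM t ht hts
    rw [Finset.sum_insert ha] at hts
    by_cases h : t ≤ ∑ i ∈ S, f i
    · obtain ⟨B, hB, h1, h2⟩ := ih (fun i hi => hfM i (Finset.mem_insert_of_mem hi)) t ht h
      exact ⟨B, hB.trans (Finset.subset_insert a S), h1, h2⟩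
    · push_neg at h
      by_cases h2 : f a ≤ t
      · obtain ⟨B, hB, hB1, hB2⟩ := ih (fun i hi => hfM i (Finset.mem_insert_of_mem hi))
          (t - f a) (by linarith) (by linarith)
        have haB : a ∉ B := fun hmem => ha (hB hmem)
        refine ⟨insert a B, Finset.insert_subset_insert a hB, ?_, ?_⟩
        · rw [Finset.sum_insert haB]; linarith
        · rw [Finset.sum_insert haB]; linarith
      · push_neg at h2
        have : f a ≤ M := hfM a (Finset.mem_insert_self a S)
        exact ⟨∅, by simp, by simp; linarith, by simp; linarith⟩

/-- The moduli space of closed `n`-gons in `ℝ³` with prescribed side lengths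
`λ₁, …, λₙ > 0` is non-empty if and only if each `λⱼ` is at most the sum of the
others. -/
theorem polygon_space_nonempty (n : ℕ) (hn : 1 ≤ n) (lam : Fin n → ℝ)
    (hpos : ∀ j, 0 < lam j) :
    (∃ x : Fin n → EuclideanSpace ℝ (Fin 3),
      (∀ j, ‖x j‖ = lam j) ∧ ∑ j, x j = 0) ↔
    ∀ j, lam j ≤ ∑ i ∈ Finset.univ.erase j, lam i := by
  constructor
  · rintro ⟨x, hnorm, hsum⟩ j
    have hxj : x j = -∑ i ∈ Finset.univ.erase j, x i := by
      have := Finset.add_sum_erase Finset.univ x (Finset.mem_univ j)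
      rw [hsum] at this
      linear_combination (norm := module) this
    calc lam j = ‖x j‖ := (hnorm j).symm
      _ = ‖∑ i ∈ Finset.univ.erase j, x i‖ := by rw [hxj, norm_neg]
      _ ≤ ∑ i ∈ Finset.univ.erase j, ‖x i‖ := norm_sum_le _ _
      _ = ∑ i ∈ Finset.univ.erase j, lam i := by
        exact Finset.sum_congr rfl fun i _ => hnorm i
  · intro hcond
    -- choose an index with maximal side length
    have huniv : (Finset.univ : Finset (Fin n)).Nonempty := ⟨⟨0, hn⟩, Finset.mem_univ _⟩
    obtain ⟨j, -, hjmax⟩ := Finset.exists_max_image Finset.univ lam huniv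
    set s : ℝ := ∑ i ∈ Finset.univ.erase j, lam i with hs
    have hjs : lam j ≤ s := hcond j
    -- find a subset B of the other indices whose sum lies in [(s-λⱼ)/2, (s+λⱼ)/2]
    obtain ⟨B, hB, hB1, hB2⟩ := exists_subset_sum_between lam (lam j) (le_of_lt (hpos j))
      (Finset.univ.erase j) (fun i _ => hjmax i (Finset.mem_univ i))
      ((s + lam j)/2) (by linarith [hpos j]) (by linarith)
    set C : Finset (Fin n) := Finset.univ.erase j \ B with hC
    set b : ℝ := ∑ i ∈ B, lam i with hbdef
    set c : ℝ := ∑ i ∈ C, lam i with hcdef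
    have hbc : c + b = s := by
      rw [hcdef, hbdef, hC, hs]
      exact Finset.sum_sdiff hB
    have hbnn : 0 ≤ b := by linarith
    have hcnn : 0 ≤ c := by linarith
    obtain ⟨u, v, w, hu, hv, hw, huvw⟩ := triangle_vectors (lam j) b c (hpos j)
      hbnn hcnn (by linarith) (by linarith) (by linarith)
    classical
    refine ⟨fun i => if i = j then lam j • u else if i ∈ B then lam i • v else lam i • w,
      ?_, ?_⟩
    · intro i
      by_cases hij : i = j
      · simp [hij, norm_smul, hu, abs_of_pos (hpos j)]
      · by_cases hiB : i ∈ B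
        · simp [hij, hiB, norm_smul, hv, abs_of_pos (hpos i)]
        · simp [hij, hiB, norm_smul, hw, abs_of_pos (hpos i)]
    · rw [← Finset.add_sum_erase Finset.univ _ (Finset.mem_univ j)]
      have hsplit : ∑ i ∈ Finset.univ.erase j,
          (if i = j then lam j • u else if i ∈ B then lam i • v else lam i • w)
          = c • w + b • v := by
        rw [← Finset.sum_sdiff hB, ← hC]
        have e1 : ∑ i ∈ C,
            (if i = j then lam j • u else if i ∈ B then lam i • v else lam i • w)
            = ∑ i ∈ C, lam i • w := Finset.sum_congr rfl fun i hi => by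
          have hi' : i ∈ Finset.univ.erase j \ B := hi
          have hij : i ≠ j := Finset.ne_of_mem_erase (Finset.sdiff_subset hi')
          have hiB : i ∉ B := (Finset.mem_sdiff.mp hi').2
          simp [hij, hiB]
        have e2 : ∑ i ∈ B,
            (if i = j then lam j • u else if i ∈ B then lam i • v else lam i • w)
            = ∑ i ∈ B, lam i • v := Finset.sum_congr rfl fun i hi => by
          have hij : i ≠ j := Finset.ne_of_mem_erase (hB hi)
          simp [hij, hi]
        rw [e1, e2, ← Finset.sum_smul, ← Finset.sum_smul]
      rw [hsplit, if_pos rfl]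
      linear_combination (norm := module) huvw
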